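/- Let A be a C*-algebra, let x₁, x₂ be positive mutually orthogonal elements of A, let m ≥ 2, and let ω ∈ ℂ with |ω| = 1. Then ‖x₁^{1/m} + ω x₂^{1/m}‖^m = max(‖x₁‖, ‖x₂‖). -/

import Mathlib

open scoped NNReal

lemma aux_cfc_mul_eq_zero {A : Type*} [CStarAlgebra A] [PartialOrder A] [StarOrderedRing A]
    {a b : A} (ha : IsSelfAdjoint a) (hab : a * b = 0) (hba : b * a = 0)
    (f : ℝ → ℝ) (hf : ContinuousOn f (quasispectrum ℝ a)) (hf0 : f 0 = 0) :
    cfcₙ f a * b = 0 ∧ b * cfcₙ f a = 0 := by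
  have h0 : ((0 : quasispectrum ℝ a) : ℝ) = 0 := rfl
  have hid : cfcₙHom (R := ℝ) ha (.id (quasispectrum ℝ a)) = a := by
    simpa using cfcₙHom_id (R := ℝ) ha
  have hstar : (star (ContinuousMapZero.id (quasispectrum ℝ a) : ContinuousMapZero (quasispectrum ℝ a) ℝ))
      = ContinuousMapZero.id (quasispectrum ℝ a) := by
    ext x; simp
  constructor
  · rw [cfcₙ_apply f a hf hf0 ha]
    refine ContinuousMapZero.nonUnitalStarAlgHom_apply_mul_eq_zero (cfcₙHom ha) b ?_ ?_
      (cfcₙHom_continuous ha) _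
    · rw [hid]; exact hab
    · rw [hstar, hid]; exact hab
  · rw [cfcₙ_apply f a hf hf0 ha]
    refine ContinuousMapZero.mul_nonUnitalStarAlgHom_apply_eq_zero (cfcₙHom ha) b ?_ ?_
      (cfcₙHom_continuous ha) _
    · rw [hid]; exact hba
    · rw [hstar, hid]; exact hba

lemma aux_orth_norm {A : Type*} [CStarAlgebra A] [PartialOrder A] [StarOrderedRing A]
    {a b : A} (ha : 0 ≤ a) (hb : 0 ≤ b) (hab : a * b = 0) :
    ‖a + b‖ = max ‖a‖ ‖b‖ := by
  rcases subsingleton_or_nontrivial A with hA | hA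
  · simp [Subsingleton.elim a 0, Subsingleton.elim b 0]
  refine le_antisymm ?_ (max_le
    (CStarAlgebra.norm_le_norm_of_nonneg_of_le ha (le_add_of_nonneg_right hb))
    (CStarAlgebra.norm_le_norm_of_nonneg_of_le hb (le_add_of_nonneg_left ha)))
  have hmem : ‖a + b‖ ∈ spectrum ℝ (a + b) :=
    CStarAlgebra.norm_mem_spectrum_of_nonneg (add_nonneg ha hb)
  by_cases h0 : ‖a + b‖ = 0
  · rw [h0]; exact le_max_of_le_left (norm_nonneg a)
  have key : ‖a + b‖ ∈ spectrum ℝ a ∨ ‖a + b‖ ∈ spectrum ℝ b := by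
    by_contra hc
    push_neg at hc
    obtain ⟨h1, h2⟩ := hc
    rw [spectrum.notMem_iff] at h1 h2
    set c : A := algebraMap ℝ A ‖a + b‖ with hc_def
    have hcomm : a * c = c * a := (Algebra.commutes _ _).symm
    have hprod : (c - a) * (c - b) = c * (c - (a + b)) := by
      rw [sub_mul, mul_sub, mul_sub, mul_sub, hab, hcomm]
      noncomm_ring
    have hu : IsUnit (c * (c - (a + b))) := hprod ▸ h1.mul h2
    have hcu : IsUnit c := (isUnit_iff_ne_zero.mpr h0).map (algebraMap ℝ A)
    obtain ⟨u, hu_eq⟩ := hcu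
    have : (c - (a + b)) = ↑u⁻¹ * (c * (c - (a + b))) := by
      rw [← mul_assoc, ← hu_eq, u.inv_mul, one_mul]
    rw [spectrum.mem_iff] at hmem
    exact hmem (this ▸ (u⁻¹.isUnit.mul hu))
  rcases key with h | h
  · exact le_max_of_le_left <|
      (Real.norm_of_nonneg (norm_nonneg (a + b))).symm.trans_le (spectrum.norm_le_norm_of_mem h)
  · exact le_max_of_le_right <|
      (Real.norm_of_nonneg (norm_nonneg (a + b))).symm.trans_le (spectrum.norm_le_norm_of_mem h)

lemma aux_nnrpow_eq_real_cfc {A : Type*} [CStarAlgebra A] [PartialOrder A] [StarOrderedRing A]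
    (x : A) (hx : 0 ≤ x) (p : ℝ≥0) :
    CFC.nnrpow x p = cfcₙ (fun t : ℝ ↦ ((Real.toNNReal t ^ (p : ℝ) : ℝ≥0) : ℝ)) x := by
  rw [show CFC.nnrpow x p = cfcₙ (NNReal.nnrpow · p) x from rfl, cfcₙ_nnreal_eq_real (ha := hx)]

lemma aux_nnnorm_nnrpow {A : Type*} [CStarAlgebra A] [PartialOrder A] [StarOrderedRing A]
    (x : A) (hx : 0 ≤ x) (p : ℝ≥0) (hp : p ≠ 0) :
    ‖CFC.nnrpow x p‖₊ = ‖x‖₊ ^ (p : ℝ) := by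
  have hG1 : IsGreatest (quasispectrum ℝ≥0 x) ‖x‖₊ := by
    have := IsGreatest.nnnorm_cfcₙ_nnreal (id : ℝ≥0 → ℝ≥0) x continuous_id.continuousOn rfl hx
    simpa [cfcₙ_id ℝ≥0 x] using this
  have hG2 : IsGreatest ((fun t : ℝ≥0 ↦ t ^ (p:ℝ)) '' quasispectrum ℝ≥0 x) ‖CFC.nnrpow x p‖₊ := by
    have := IsGreatest.nnnorm_cfcₙ_nnreal (fun t : ℝ≥0 ↦ t ^ (p:ℝ)) x
      (NNReal.continuous_rpow_const p.coe_nonneg).continuousOn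
      (by simp [NNReal.zero_rpow (NNReal.coe_ne_zero.mpr hp)]) hx
    simpa [CFC.nnrpow_def, NNReal.nnrpow_def] using this
  refine hG2.unique ⟨⟨‖x‖₊, hG1.1, rfl⟩, ?_⟩
  rintro - ⟨t, ht, rfl⟩
  exact NNReal.rpow_le_rpow (hG1.2 ht) p.coe_nonneg

/-- In a C*-algebra, if `x₁, x₂` are positive and mutually orthogonal, `m ≥ 2`, and
`|ω| = 1`, then `‖x₁^{1/m} + ω • x₂^{1/m}‖^m = max ‖x₁‖ ‖x₂‖`. -/
theorem stmt_8 {A : Type*} [CStarAlgebra A] [PartialOrder A] [StarOrderedRing A]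
    (x₁ x₂ : A) (hx₁ : 0 ≤ x₁) (hx₂ : 0 ≤ x₂)
    (h₁₂ : x₁ * x₂ = 0) (h₂₁ : x₂ * x₁ = 0)
    (m : ℕ) (hm : 2 ≤ m) (ω : ℂ) (hω : ‖ω‖ = 1) :
    ‖CFC.nnrpow x₁ (1 / m : ℝ≥0) + ω • CFC.nnrpow x₂ (1 / m : ℝ≥0)‖ ^ m
      = max ‖x₁‖ ‖x₂‖ := by
  have hm0 : (m : ℝ≥0) ≠ 0 := by positivity
  set p : ℝ≥0 := 1 / m with hp_def
  have hp : p ≠ 0 := by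
    simp only [hp_def, ne_eq, div_eq_zero_iff, one_ne_zero, false_or]
    exact hm0
  set f : ℝ → ℝ := fun t ↦ ((Real.toNNReal t ^ (p : ℝ) : ℝ≥0) : ℝ) with hf_def
  have hf : Continuous f :=
    continuous_subtype_val.comp <|
      (NNReal.continuous_rpow_const p.coe_nonneg).comp continuous_real_toNNReal
  have hf0 : f 0 = 0 := by
    simp only [hf_def, Real.toNNReal_zero]
    rw [NNReal.zero_rpow (NNReal.coe_ne_zero.mpr hp), NNReal.coe_zero]
  set y₁ : A := CFC.nnrpow x₁ p with hy₁_def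
  set y₂ : A := CFC.nnrpow x₂ p with hy₂_def
  have hy₁ : 0 ≤ y₁ := CFC.nnrpow_nonneg
  have hy₂ : 0 ≤ y₂ := CFC.nnrpow_nonneg
  -- orthogonality of the roots
  have h1 : y₁ * x₂ = 0 ∧ x₂ * y₁ = 0 := by
    rw [hy₁_def, aux_nnrpow_eq_real_cfc x₁ hx₁ p]
    exact aux_cfc_mul_eq_zero (.of_nonneg hx₁) h₁₂ h₂₁ f hf.continuousOn hf0
  have h2 : y₂ * y₁ = 0 ∧ y₁ * y₂ = 0 := by
    rw [hy₂_def, aux_nnrpow_eq_real_cfc x₂ hx₂ p]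
    exact aux_cfc_mul_eq_zero (.of_nonneg hx₂) h1.2 h1.1 f hf.continuousOn hf0
  obtain ⟨h21, h12⟩ := h2
  -- star y * y = y₁² + y₂²
  set y : A := y₁ + ω • y₂ with hy_def
  have hsy : star y * y = y₁ * y₁ + y₂ * y₂ := by
    have hω1 : ω * star ω = 1 := by
      rw [show (star ω) = (starRingEnd ℂ) ω from rfl, RCLike.mul_conj, hω]
      norm_num
    rw [hy_def, star_add, star_smul, (IsSelfAdjoint.of_nonneg hy₁).star_eq,
      (IsSelfAdjoint.of_nonneg hy₂).star_eq]
    simp only [add_mul, mul_add, smul_mul_assoc, mul_smul_comm, h12, h21, smul_zero,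
      smul_smul, add_zero, zero_add]
    rw [hω1, one_smul]
  -- norm computation
  have hsq12 : (y₁ * y₁) * (y₂ * y₂) = 0 := by
    rw [mul_assoc, ← mul_assoc y₁ y₂, h12, zero_mul, mul_zero]
  have hnn₁ : 0 ≤ y₁ * y₁ := by
    simpa [(IsSelfAdjoint.of_nonneg hy₁).star_eq] using star_mul_self_nonneg y₁
  have hnn₂ : 0 ≤ y₂ * y₂ := by
    simpa [(IsSelfAdjoint.of_nonneg hy₂).star_eq] using star_mul_self_nonneg y₂
  have hnormy : ‖y‖ * ‖y‖ = max (‖y₁‖ * ‖y₁‖) (‖y₂‖ * ‖y₂‖) := by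
    rw [← CStarRing.norm_star_mul_self, hsy, aux_orth_norm hnn₁ hnn₂ hsq12]
    congr 1
    · conv_rhs => rw [← CStarRing.norm_star_mul_self (x := y₁),
        (IsSelfAdjoint.of_nonneg hy₁).star_eq]
    · conv_rhs => rw [← CStarRing.norm_star_mul_self (x := y₂),
        (IsSelfAdjoint.of_nonneg hy₂).star_eq]
  have hy_eq : ‖y‖ = max ‖y₁‖ ‖y₂‖ := by
    have hmax : 0 ≤ max ‖y₁‖ ‖y₂‖ := le_max_of_le_left (norm_nonneg _)
    rcases le_total ‖y₁‖ ‖y₂‖ with h | h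
    · rw [max_eq_right h] at *
      have : max (‖y₁‖ * ‖y₁‖) (‖y₂‖ * ‖y₂‖) = ‖y₂‖ * ‖y₂‖ :=
        max_eq_right (mul_le_mul h h (norm_nonneg _) (norm_nonneg _))
      rw [this] at hnormy
      exact mul_self_inj (norm_nonneg _) (norm_nonneg _) |>.mp hnormy
    · rw [max_eq_left h] at *
      have : max (‖y₁‖ * ‖y₁‖) (‖y₂‖ * ‖y₂‖) = ‖y₁‖ * ‖y₁‖ :=
        max_eq_left (mul_le_mul h h (norm_nonneg _) (norm_nonneg _))
      rw [this] at hnormy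
      exact mul_self_inj (norm_nonneg _) (norm_nonneg _) |>.mp hnormy
  -- norms of the roots
  have hroot : ∀ (x : A), 0 ≤ x → ‖CFC.nnrpow x p‖ ^ m = ‖x‖ := by
    intro x hx
    have := aux_nnnorm_nnrpow x hx p hp
    have hcoe : ‖CFC.nnrpow x p‖ = ‖x‖ ^ (p : ℝ) := by
      rw [← coe_nnnorm, ← coe_nnnorm, this, NNReal.coe_rpow]
    rw [hcoe, ← Real.rpow_natCast (‖x‖ ^ (p:ℝ)) m, ← Real.rpow_mul (norm_nonneg x)]
    have : (p : ℝ) * m = 1 := by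
      rw [hp_def]
      push_cast
      field_simp
    rw [this, Real.rpow_one]
  have hy1m : ‖y₁‖ ^ m = ‖x₁‖ := hroot x₁ hx₁
  have hy2m : ‖y₂‖ ^ m = ‖x₂‖ := hroot x₂ hx₂
  calc ‖y‖ ^ m = (max ‖y₁‖ ‖y₂‖) ^ m := by rw [hy_eq]
    _ = max (‖y₁‖ ^ m) (‖y₂‖ ^ m) := by
        rcases le_total ‖y₁‖ ‖y₂‖ with h | h
        · rw [max_eq_right h, max_eq_right (pow_le_pow_left₀ (norm_nonneg _) h m)]
        · rw [max_eq_left h, max_eq_left (pow_le_pow_left₀ (norm_nonneg _) h m)]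
    _ = max ‖x₁‖ ‖x₂‖ := by rw [hy1m, hy2m]
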